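/- Let G be a topological group, V a real topological vector space which is a Baire space, and ι a map assigning to each v ∈ V a one-parameter subgroup ι(v) of G, such that ι(c·v)(s) = ι(v)(c·s) for all c, s ∈ ℝ and v ∈ V, such that ι(v + w) = ι(v) + ι(w) in the Trotter sense for all v, w ∈ V, and such that the map V → C(ℝ, G), v ↦ ι(v), is continuous with respect to the compact-open topology on C(ℝ, G). Let Y be a metrizable locally convex real topological vector space and φ : G → Y a function of class LUC¹. Then for every g ∈ G the map V → Y, v ↦ (D_{ι(v)} φ)(g), is ℝ-linear and continuous. -/

import Mathlib

open Filter Topology Pointwise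

/-- A one-parameter subgroup of a topological group `G`: a continuous homomorphism
from the additive group of reals into `G`. -/
structure OneParamSubgroup (G : Type*) [Group G] [TopologicalSpace G] where
  toFun : ℝ → G
  continuous_toFun : Continuous toFun
  map_add : ∀ s t : ℝ, toFun (s + t) = toFun s * toFun t

/-- `X = X₁ + X₂` in the Trotter sense: `(X₁(t/n) X₂(t/n))^n → X(t)` uniformly on
compact subsets of `ℝ`. -/
def TrotterSum {G : Type*} [Group G] [TopologicalSpace G]
    (X X₁ X₂ : OneParamSubgroup G) : Prop :=
  ∀ K : Set ℝ, IsCompact K → ∀ W ∈ 𝓝 (1 : G), ∃ N : ℕ, ∀ n : ℕ, N ≤ n → ∀ t ∈ K,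
    (X.toFun t)⁻¹ * (X₁.toFun (t / (n : ℝ)) * X₂.toFun (t / (n : ℝ))) ^ n ∈ W

/-- `(D_X φ)(g)` exists and equals `z`. -/
def HasDirDerivAt {G Y : Type*} [Group G] [TopologicalSpace G]
    [AddCommGroup Y] [Module ℝ Y] [TopologicalSpace Y]
    (φ : G → Y) (X : OneParamSubgroup G) (g : G) (z : Y) : Prop :=
  Tendsto (fun t : ℝ => t⁻¹ • (φ (g * X.toFun t) - φ g)) (𝓝[≠] (0 : ℝ)) (𝓝 z)

/-- `φ : G → Y` is locally left uniformly continuous. -/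
def LocallyLeftUC {G Y : Type*} [Group G] [TopologicalSpace G]
    [AddCommGroup Y] [TopologicalSpace Y] (φ : G → Y) : Prop :=
  ∀ g₀ : G, ∃ V ∈ 𝓝 g₀, ∀ U ∈ 𝓝 (0 : Y), ∃ W ∈ 𝓝 (1 : G),
    ∀ x ∈ V, ∀ y ∈ V, x⁻¹ * y ∈ W → φ x - φ y ∈ U

/-- `φ` is of class LUC¹, with `D X g = (D_X φ)(g)`. -/
def IsLUC1 {G Y : Type*} [Group G] [TopologicalSpace G]
    [AddCommGroup Y] [Module ℝ Y] [TopologicalSpace Y]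
    (φ : G → Y) (D : OneParamSubgroup G → G → Y) : Prop :=
  LocallyLeftUC φ ∧ (∀ X g, HasDirDerivAt φ X g (D X g)) ∧
    ∀ X, LocallyLeftUC (D X)

section Prelim
variable {G Y : Type*} [Group G] [TopologicalSpace G]
  [AddCommGroup Y] [TopologicalSpace Y]

lemma OneParamSubgroup.map_zero (X : OneParamSubgroup G) : X.toFun 0 = 1 := by
  have h := X.map_add 0 0
  rw [add_zero] at h
  exact (mul_left_cancel (a := X.toFun 0) (by rw [mul_one, ← h])).symm

lemma LocallyLeftUC.continuous [IsTopologicalAddGroup Y] [ContinuousMul G] {φ : G → Y}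
    (h : LocallyLeftUC φ) : Continuous φ := by
  rw [continuous_iff_continuousAt]
  intro g₀
  rw [ContinuousAt, Tendsto]
  intro U' hU'
  rw [mem_map]
  obtain ⟨V, hV, H⟩ := h g₀
  have hU0 : (fun z : Y => φ g₀ - z) ⁻¹' U' ∈ 𝓝 (0 : Y) := by
    have : Continuous fun z : Y => φ g₀ - z := continuous_const.sub continuous_id
    have := this.continuousAt (x := (0:Y))
    apply this
    simpa using hU'
  obtain ⟨W, hW, hWU⟩ := H _ hU0
  have hmem : {y : G | g₀⁻¹ * y ∈ W} ∈ 𝓝 g₀ := by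
    have : Continuous fun y : G => g₀⁻¹ * y := continuous_const.mul continuous_id
    have := this.continuousAt (x := g₀)
    apply this
    simpa using hW
  filter_upwards [hV, hmem] with y hyV hyW
  have h2 := hWU g₀ (mem_of_mem_nhds hV) y hyV hyW
  have h3 : φ g₀ - (φ g₀ - φ y) ∈ U' := h2
  simpa using h3

/-- translated LLUC estimate -/
lemma LocallyLeftUC.translate {φ : G → Y} (h : LocallyLeftUC φ) (g : G)
    [ContinuousMul G] (C : Set Y) (hC : C ∈ 𝓝 (0 : Y)) (hCs : -C = C) :
    ∃ W ∈ 𝓝 (1 : G), ∀ x ∈ W, φ (g * x) - φ g ∈ C := by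
  obtain ⟨V, hV, H⟩ := h g
  obtain ⟨W, hW, hWC⟩ := H C hC
  have hmul : {x : G | g * x ∈ V} ∈ 𝓝 (1 : G) := by
    have : Continuous fun x : G => g * x := continuous_const.mul continuous_id
    have := this.continuousAt (x := (1:G))
    apply this
    simpa using hV
  refine ⟨W ∩ {x | g * x ∈ V}, inter_mem hW hmul, ?_⟩
  rintro x ⟨hxW, hxV⟩
  have := hWC g (mem_of_mem_nhds hV) (g * x) hxV (by simpa using hxW)
  rw [← hCs, Set.mem_neg]
  simpa using this

end Prelim

section MVT
variable {G Y : Type*} [Group G] [TopologicalSpace G]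
  [AddCommGroup Y] [Module ℝ Y] [TopologicalSpace Y]
  [IsTopologicalAddGroup Y] [ContinuousSMul ℝ Y] [LocallyConvexSpace ℝ Y]

/-- Mean value estimate: if the directional derivative stays in a closed convex set
along the path, then the difference quotient is in that set. -/
lemma dirDeriv_slope_mem (φ ψ : G → Y) (X : OneParamSubgroup G)
    (hder : ∀ x : G, HasDirDerivAt φ X x (ψ x))
    (x : G) (t : ℝ) (ht : t ≠ 0) (C : Set Y) (hCc : Convex ℝ C) (hCcl : IsClosed C)
    (hmem : ∀ s ∈ Set.uIcc (0:ℝ) t, ψ (x * X.toFun s) ∈ C) :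
    t⁻¹ • (φ (x * X.toFun t) - φ x) ∈ C := by
  by_contra hz
  obtain ⟨ℓ, u, hu1, hu2⟩ := geometric_hahn_banach_closed_point hCc hCcl hz
  set f : ℝ → ℝ := fun s => ℓ (φ (x * X.toFun s)) with hf_def
  have hf : ∀ s : ℝ, HasDerivAt f (ℓ (ψ (x * X.toFun s))) s := by
    intro s
    rw [hasDerivAt_iff_tendsto_slope]
    have hq := hder (x * X.toFun s)
    have hsub : Tendsto (fun u' : ℝ => u' - s) (𝓝[≠] s) (𝓝[≠] (0:ℝ)) := by
      apply Tendsto.inf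
      · simpa using (show Continuous fun u' : ℝ => u' - s by fun_prop).tendsto s
      · exact tendsto_principal_principal.mpr fun u' h => sub_ne_zero.mpr h
    have hcomp := (ℓ.continuous.tendsto _).comp (hq.comp hsub)
    refine hcomp.congr fun u' => ?_
    show ℓ ((u' - s)⁻¹ • (φ ((x * X.toFun s) * X.toFun (u' - s)) - φ (x * X.toFun s)))
        = slope f s u'
    rw [slope_def_field, hf_def]
    have hX : X.toFun u' = X.toFun s * X.toFun (u' - s) := by
      rw [← X.map_add]; congr 1; ring
    rw [map_smul, map_sub, mul_assoc, ← hX]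
    simp [div_eq_inv_mul, smul_eq_mul]
  have hfc : Continuous f := by
    rw [continuous_iff_continuousAt]; exact fun s => (hf s).continuousAt
  have key : ∃ c ∈ Set.uIcc (0:ℝ) t, ℓ (ψ (x * X.toFun c)) = (f t - f 0) / t := by
    rcases lt_or_gt_of_ne ht with htneg | htpos
    · obtain ⟨c, hc, hceq⟩ := exists_hasDerivAt_eq_slope f _ htneg
        hfc.continuousOn (fun s _ => hf s)
      refine ⟨c, ?_, ?_⟩
      · rw [Set.uIcc_of_ge htneg.le]; exact Set.Ioo_subset_Icc_self hc
      · rw [hceq, zero_sub, div_neg, ← neg_div, neg_sub]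
    · obtain ⟨c, hc, hceq⟩ := exists_hasDerivAt_eq_slope f _ htpos
        hfc.continuousOn (fun s _ => hf s)
      refine ⟨c, ?_, ?_⟩
      · rw [Set.uIcc_of_le htpos.le]; exact Set.Ioo_subset_Icc_self hc
      · rw [hceq, sub_zero]
  obtain ⟨c, hcmem, hceq⟩ := key
  have h1 : ℓ (ψ (x * X.toFun c)) < u := hu1 _ (hmem c hcmem)
  have h2 : (f t - f 0) / t = ℓ (t⁻¹ • (φ (x * X.toFun t) - φ x)) := by
    rw [map_smul, map_sub, hf_def]
    simp [X.map_zero, div_eq_inv_mul, smul_eq_mul]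
  rw [hceq, h2] at h1
  exact absurd (h1.trans' hu2) (lt_irrefl _)

end MVT

section ConvexNbhd
variable {Y : Type*} [AddCommGroup Y] [Module ℝ Y] [TopologicalSpace Y]
  [IsTopologicalAddGroup Y] [ContinuousSMul ℝ Y] [LocallyConvexSpace ℝ Y]

lemma exists_closed_convex_symm_nhds (U : Set Y) (hU : U ∈ 𝓝 (0:Y)) :
    ∃ C ∈ 𝓝 (0:Y), IsClosed C ∧ Convex ℝ C ∧ -C = C ∧ C ⊆ U := by
  haveI : RegularSpace Y := IsTopologicalAddGroup.regularSpace (G := Y)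
  obtain ⟨F, hF, hFcl, hFU⟩ := exists_mem_nhds_isClosed_subset hU
  obtain ⟨C₂, ⟨hC₂n, hC₂c⟩, hC₂F⟩ := (LocallyConvexSpace.convex_basis (𝕜 := ℝ) (0:Y)).mem_iff.mp hF
  set C₃ := closure C₂ with hC₃def
  have hC₃n : C₃ ∈ 𝓝 (0:Y) := mem_of_superset hC₂n subset_closure
  have hC₃cl : IsClosed C₃ := isClosed_closure
  have hC₃c : Convex ℝ C₃ := hC₂c.closure
  have hC₃F : C₃ ⊆ F := closure_minimal hC₂F hFcl
  refine ⟨C₃ ∩ -C₃, ?_, ?_, ?_, ?_, ?_⟩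
  · exact inter_mem hC₃n (neg_mem_nhds_zero Y hC₃n)
  · exact hC₃cl.inter (hC₃cl.neg)
  · exact hC₃c.inter (hC₃c.neg)
  · ext y; simp [Set.mem_neg, and_comm]
  · exact (Set.inter_subset_left).trans (hC₃F.trans hFU)

end ConvexNbhd

lemma abs_le_abs_of_mem_uIcc {s a : ℝ} (h : s ∈ Set.uIcc 0 a) : |s| ≤ |a| := by
  rcases Set.mem_uIcc.mp h with ⟨h1, h2⟩ | ⟨h1, h2⟩
  · rw [abs_of_nonneg h1]; exact h2.trans (le_abs_self a)
  · rw [abs_of_nonpos h2]; exact (neg_le_neg h1).trans (neg_le_abs a)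

section Slab
variable {Y : Type*} [AddCommGroup Y] [Module ℝ Y]

lemma convex_slab {C : Set Y} (hC : Convex ℝ C) (d : Y) :
    Convex ℝ {y | y - d ∈ C} := by
  intro y1 h1 y2 h2 a b ha hb hab
  have key : (a • y1 + b • y2) - d = a • (y1 - d) + b • (y2 - d) := by
    rw [smul_sub, smul_sub,
      show a•y1 - a•d + (b•y2 - b•d) = a•y1 + b•y2 - (a•d + b•d) by abel,
      ← add_smul, hab, one_smul]
  show (a • y1 + b • y2) - d ∈ C
  rw [key]
  exact hC h1 h2 ha hb hab

end Slab

section Trotter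
variable {G Y : Type*} [Group G] [TopologicalSpace G] [IsTopologicalGroup G]
  [AddCommGroup Y] [Module ℝ Y] [TopologicalSpace Y] [IsTopologicalAddGroup Y]
  [ContinuousSMul ℝ Y] [LocallyConvexSpace ℝ Y]

lemma hasDirDerivAt_trotter (φ : G → Y) (D : OneParamSubgroup G → G → Y)
    (hφ : IsLUC1 φ D) (g : G) (X X₁ X₂ : OneParamSubgroup G)
    (hT : TrotterSum X X₁ X₂) :
    HasDirDerivAt φ X g (D X₁ g + D X₂ g) := by
  obtain ⟨hluc, hder, hlucD⟩ := hφ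
  set D₁ := D X₁ g with hD₁
  set D₂ := D X₂ g with hD₂
  rw [HasDirDerivAt, Filter.tendsto_def]
  intro U' hU'
  have hU0 : {u : Y | D₁ + D₂ + u ∈ U'} ∈ 𝓝 (0:Y) := by
    have hc : Continuous fun u : Y => D₁ + D₂ + u := continuous_const.add continuous_id
    have h := hc.continuousAt (x := (0:Y))
    apply h; simpa using hU'
  obtain ⟨U₁, hU₁, hU₁s⟩ := exists_nhds_zero_quarter hU0
  obtain ⟨C, hCn, hCcl, hCc, hCs, hCU₁⟩ := exists_closed_convex_symm_nhds U₁ hU₁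
  have hC3 : ∀ a ∈ C, ∀ b ∈ C, ∀ c ∈ C, D₁ + D₂ + (a + b + c) ∈ U' := by
    intro a ha b hb c hc
    have := hU₁s (hCU₁ ha) (hCU₁ hb) (hCU₁ hc) (mem_of_mem_nhds hU₁)
    simpa using this
  set S₁ : Set Y := {y | y - D₁ ∈ C} with hS₁def
  set S₂ : Set Y := {y | y - D₂ ∈ C} with hS₂def
  have hS₁c : Convex ℝ S₁ := convex_slab hCc D₁
  have hS₂c : Convex ℝ S₂ := convex_slab hCc D₂
  have hS₁cl : IsClosed S₁ :=
    hCcl.preimage (continuous_id.sub (continuous_const : Continuous fun _ : Y => D₁))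
  have hS₂cl : IsClosed S₂ :=
    hCcl.preimage (continuous_id.sub (continuous_const : Continuous fun _ : Y => D₂))
  obtain ⟨W₁', hW₁'n, hW₁'⟩ := (hlucD X₁).translate g C hCn hCs
  obtain ⟨W₂', hW₂'n, hW₂'⟩ := (hlucD X₂).translate g C hCn hCs
  set W₀ := W₁' ∩ W₂' with hW₀def
  have hW₀n : W₀ ∈ 𝓝 (1:G) := inter_mem hW₁'n hW₂'n
  obtain ⟨V₁, hV₁n, hV₁⟩ := exists_nhds_one_split hW₀n
  obtain ⟨V₂, hV₂n, hV₂⟩ := exists_nhds_one_split hV₁n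
  have h1V₂ : (1:G) ∈ V₂ := mem_of_mem_nhds hV₂n
  have hquad : ∀ a ∈ V₂, ∀ b ∈ V₂, ∀ c ∈ V₂, ∀ d ∈ V₂, a * b * c * d ∈ W₀ := by
    intro a ha b hb c hc d hd
    have := hV₁ _ (hV₂ a ha b hb) _ (hV₂ c hc d hd)
    rwa [show a * b * (c * d) = a * b * c * d by group] at this
  have hTn : {s : ℝ | X.toFun s ∈ V₂ ∧ X₁.toFun s ∈ V₂ ∧ X₂.toFun s ∈ V₂} ∈ 𝓝 (0:ℝ) := by
    have h0 : X.toFun 0 = 1 := X.map_zero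
    have h1 : X₁.toFun 0 = 1 := X₁.map_zero
    have h2 : X₂.toFun 0 = 1 := X₂.map_zero
    have e0 := X.continuous_toFun.continuousAt (x := (0:ℝ)) (by rw [h0]; exact hV₂n)
    have e1 := X₁.continuous_toFun.continuousAt (x := (0:ℝ)) (by rw [h1]; exact hV₂n)
    have e2 := X₂.continuous_toFun.continuousAt (x := (0:ℝ)) (by rw [h2]; exact hV₂n)
    exact inter_mem e0 (inter_mem e1 e2)
  obtain ⟨ε, hεpos, hεball⟩ := Metric.mem_nhds_iff.mp hTn
  set δ := ε / 2 with hδdef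
  have hδpos : 0 < δ := by positivity
  have hδ : ∀ s : ℝ, |s| ≤ δ →
      X.toFun s ∈ V₂ ∧ X₁.toFun s ∈ V₂ ∧ X₂.toFun s ∈ V₂ := by
    intro s hs
    apply hεball
    rw [Metric.mem_ball, Real.dist_eq, sub_zero]
    calc |s| ≤ ε / 2 := hs
      _ < ε := by linarith
  obtain ⟨N₁, hN₁⟩ := hT (Set.Icc (-δ) δ) isCompact_Icc V₂ hV₂n
  have MAIN : ∀ t : ℝ, t ≠ 0 → |t| ≤ δ →
      t⁻¹ • (φ (g * X.toFun t) - φ g) ∈ U' := by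
    intro t ht0 htδ
    set p : ℕ → G := fun n => X₁.toFun (t / (n:ℝ)) * X₂.toFun (t / (n:ℝ)) with hpdef
    have hT₂n : {s : ℝ | ∀ k < N₁, (X₁.toFun s * X₂.toFun s) ^ k ∈ V₂} ∈ 𝓝 (0:ℝ) := by
      have hset : {s : ℝ | ∀ k < N₁, (X₁.toFun s * X₂.toFun s) ^ k ∈ V₂}
          = ⋂ k ∈ Finset.range N₁, ((fun s => (X₁.toFun s * X₂.toFun s) ^ k) ⁻¹' V₂) := by
        ext s; simp [Finset.mem_range]
      rw [hset, Filter.biInter_finset_mem]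
      intro k _
      apply ((X₁.continuous_toFun.mul X₂.continuous_toFun).pow k).continuousAt (x := (0:ℝ))
      show V₂ ∈ 𝓝 ((X₁.toFun 0 * X₂.toFun 0) ^ k)
      rw [X₁.map_zero, X₂.map_zero, mul_one, one_pow]
      exact hV₂n
    obtain ⟨ε₂, hε₂pos, hε₂ball⟩ := Metric.mem_nhds_iff.mp hT₂n
    have hδ₂ : ∀ s : ℝ, |s| ≤ ε₂ / 2 → ∀ k < N₁, (X₁.toFun s * X₂.toFun s) ^ k ∈ V₂ := by
      intro s hs
      apply hε₂ball
      rw [Metric.mem_ball, Real.dist_eq, sub_zero]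
      linarith
    obtain ⟨N₂', hN₂'⟩ := exists_nat_ge (|t| / (ε₂ / 2))
    set N₂ := max N₂' 1 with hN₂def
    have hN₂1 : 1 ≤ N₂ := le_max_right _ _
    have hpk : ∀ n, N₂ ≤ n → ∀ k ≤ n, ∃ w1 ∈ V₂, ∃ w2 ∈ V₂, (p n) ^ k = w1 * w2 := by
      intro n hn k hk
      have hn1 : 1 ≤ n := hN₂1.trans hn
      have hnR : (0:ℝ) < (n:ℝ) := by exact_mod_cast hn1
      rcases Nat.eq_zero_or_pos k with hk0 | hk1
      · exact ⟨1, h1V₂, 1, h1V₂, by rw [hk0, pow_zero, mul_one]⟩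
      rcases lt_or_ge k N₁ with hkN | hkN
      · refine ⟨(p n) ^ k, ?_, 1, h1V₂, (mul_one _).symm⟩
        apply hδ₂ _ _ k hkN
        rw [abs_div, Nat.abs_cast, div_le_iff₀ hnR]
        have h1 : |t| ≤ (N₂':ℝ) * (ε₂ / 2) := (div_le_iff₀ (by positivity)).mp hN₂'
        have h2 : (N₂':ℝ) ≤ (n:ℝ) := by exact_mod_cast (le_max_left N₂' 1).trans hn
        nlinarith [hε₂pos]
      · have hkR : (0:ℝ) < (k:ℝ) := by exact_mod_cast hk1
        set t' := (k:ℝ) * t / (n:ℝ) with ht'def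
        have habs : |t'| ≤ |t| := by
          rw [ht'def, abs_div, abs_mul, Nat.abs_cast, Nat.abs_cast]
          rw [div_le_iff₀ hnR]
          have hkn : (k:ℝ) ≤ (n:ℝ) := by exact_mod_cast hk
          nlinarith [abs_nonneg t]
        have ht'mem : t' ∈ Set.Icc (-δ) δ := by
          rw [Set.mem_Icc]
          constructor
          · linarith [neg_abs_le t', habs]
          · linarith [le_abs_self t', habs]
        have htrick : t' / (k:ℝ) = t / (n:ℝ) := by
          rw [ht'def]; field_simp
        have hmem := hN₁ k hkN t' ht'mem
        rw [htrick] at hmem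
        refine ⟨X.toFun t', (hδ t' (habs.trans htδ)).1, _, hmem, ?_⟩
        simp only [mul_inv_cancel_left, hpdef]
    -- per-n estimate
    have hn0' : ∀ n, N₂ ≤ n → ((n:ℝ) ≠ 0 ∧ t / (n:ℝ) ≠ 0 ∧ |t / (n:ℝ)| ≤ δ) := by
      intro n hn
      have hn1 : 1 ≤ n := hN₂1.trans hn
      have hnR : (0:ℝ) < (n:ℝ) := by exact_mod_cast hn1
      refine ⟨ne_of_gt hnR, div_ne_zero ht0 (ne_of_gt hnR), ?_⟩
      rw [abs_div, Nat.abs_cast]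
      exact (div_le_self (abs_nonneg t) (by exact_mod_cast hn1)).trans htδ
    have ZN : ∀ n, N₂ ≤ n → t⁻¹ • (φ (g * (p n) ^ n) - φ g) ∈ S₁ + S₂ := by
      intro n hn
      obtain ⟨hnne, htn, htnδ⟩ := hn0' n hn
      have hn1 : 1 ≤ n := hN₂1.trans hn
      set a : ℕ → Y := fun k =>
        (t / (n:ℝ))⁻¹ • (φ (g * ((p n) ^ k * X₁.toFun (t / (n:ℝ)))) - φ (g * (p n) ^ k)) with hadef
      set b : ℕ → Y := fun k =>
        (t / (n:ℝ))⁻¹ • (φ (g * (p n) ^ (k+1)) - φ (g * ((p n) ^ k * X₁.toFun (t / (n:ℝ))))) with hbdef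
      have ha : ∀ k, k < n → a k ∈ S₁ := by
        intro k hk
        obtain ⟨w1, hw1, w2, hw2, hw⟩ := hpk n hn k hk.le
        have key := dirDeriv_slope_mem φ (D X₁) X₁ (fun x => hder X₁ x)
          (g * (p n) ^ k) (t / (n:ℝ)) htn S₁ hS₁c hS₁cl ?_
        · rw [hadef]
          simpa [mul_assoc] using key
        · intro s hs
          have hsabs : |s| ≤ δ := (abs_le_abs_of_mem_uIcc hs).trans htnδ
          have hx : (p n) ^ k * X₁.toFun s ∈ W₀ := by
            have h4 := hquad w1 hw1 w2 hw2 (X₁.toFun s) (hδ s hsabs).2.1 1 h1V₂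
            rw [mul_one] at h4
            rw [hw]
            exact h4
          rw [mul_assoc]
          exact hW₁' _ hx.1
      have hb : ∀ k, k < n → b k ∈ S₂ := by
        intro k hk
        obtain ⟨w1, hw1, w2, hw2, hw⟩ := hpk n hn k hk.le
        have key := dirDeriv_slope_mem φ (D X₂) X₂ (fun x => hder X₂ x)
          (g * ((p n) ^ k * X₁.toFun (t / (n:ℝ)))) (t / (n:ℝ)) htn S₂ hS₂c hS₂cl ?_
        · rw [hbdef]
          have heq : g * (p n) ^ (k+1)
              = (g * ((p n) ^ k * X₁.toFun (t / (n:ℝ)))) * X₂.toFun (t / (n:ℝ)) := by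
            rw [pow_succ, hpdef]
            simp [mul_assoc]
          simp only [heq]
          exact key
        · intro s hs
          have hsabs : |s| ≤ δ := (abs_le_abs_of_mem_uIcc hs).trans htnδ
          have hx : ((p n) ^ k * X₁.toFun (t / (n:ℝ))) * X₂.toFun s ∈ W₀ := by
            have h4 := hquad w1 hw1 w2 hw2 (X₁.toFun (t / (n:ℝ))) (hδ _ htnδ).2.1
              (X₂.toFun s) (hδ s hsabs).2.2
            rw [hw]
            exact h4
          rw [mul_assoc]
          exact hW₂' _ hx.2
      have hsum1 : ∑ k ∈ Finset.range n, ((n:ℝ)⁻¹) • a k ∈ S₁ := by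
        apply hS₁c.sum_mem (fun i _ => by positivity)
        · rw [Finset.sum_const, Finset.card_range, nsmul_eq_mul, mul_inv_cancel₀ hnne]
        · intro i hi; exact ha i (Finset.mem_range.mp hi)
      have hsum2 : ∑ k ∈ Finset.range n, ((n:ℝ)⁻¹) • b k ∈ S₂ := by
        apply hS₂c.sum_mem (fun i _ => by positivity)
        · rw [Finset.sum_const, Finset.card_range, nsmul_eq_mul, mul_inv_cancel₀ hnne]
        · intro i hi; exact hb i (Finset.mem_range.mp hi)
      have htot : ∑ k ∈ Finset.range n, ((n:ℝ)⁻¹) • (a k + b k) ∈ S₁ + S₂ := by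
        have hsplit : ∑ k ∈ Finset.range n, ((n:ℝ)⁻¹) • (a k + b k)
            = (∑ k ∈ Finset.range n, ((n:ℝ)⁻¹) • a k)
              + ∑ k ∈ Finset.range n, ((n:ℝ)⁻¹) • b k := by
          rw [← Finset.sum_add_distrib]
          exact Finset.sum_congr rfl fun k _ => smul_add _ _ _
        rw [hsplit]
        exact Set.add_mem_add hsum1 hsum2
      have hid : ∑ k ∈ Finset.range n, ((n:ℝ)⁻¹) • (a k + b k)
          = t⁻¹ • (φ (g * (p n) ^ n) - φ g) := by
        have h1 : ∀ k, ((n:ℝ)⁻¹) • (a k + b k)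
            = t⁻¹ • (φ (g * (p n) ^ (k+1)) - φ (g * (p n) ^ k)) := by
          intro k
          have e1 : a k + b k
              = (t / (n:ℝ))⁻¹ • (φ (g * (p n) ^ (k+1)) - φ (g * (p n) ^ k)) := by
            rw [hadef, hbdef]
            rw [← smul_add]
            congr 1
            abel
          rw [e1, smul_smul]
          congr 1
          field_simp
        rw [Finset.sum_congr rfl fun k _ => h1 k, ← Finset.smul_sum,
          Finset.sum_range_sub (fun k => φ (g * (p n) ^ k))]
        simp
      rw [← hid]
      exact htot
    -- limit n → ∞
    have hφcont : Continuous φ := hluc.continuous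
    have hinner : Tendsto (fun n : ℕ => (X.toFun t)⁻¹ * (p n) ^ n) atTop (𝓝 (1:G)) := by
      rw [Filter.tendsto_def]
      intro W hW
      obtain ⟨N, hN⟩ := hT {t} isCompact_singleton W hW
      exact mem_atTop_sets.mpr ⟨N, fun n hn => hN n hn t rfl⟩
    have hG : Tendsto (fun n : ℕ => g * (p n) ^ n) atTop (𝓝 (g * X.toFun t)) := by
      have hcont : Continuous fun w : G => (g * X.toFun t) * w := continuous_const.mul continuous_id
      have h5 := (hcont.tendsto (1:G)).comp hinner
      rw [mul_one] at h5
      refine h5.congr fun n => ?_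
      show (g * X.toFun t) * ((X.toFun t)⁻¹ * (p n) ^ n) = g * (p n) ^ n
      group
    have hlim : Tendsto (fun n : ℕ => t⁻¹ • (φ (g * (p n) ^ n) - φ g)) atTop
        (𝓝 (t⁻¹ • (φ (g * X.toFun t) - φ g))) :=
      (Tendsto.sub ((hφcont.tendsto _).comp hG) tendsto_const_nhds).const_smul t⁻¹
    set z := t⁻¹ • (φ (g * X.toFun t) - φ g) with hzdef
    have hzcl : z ∈ closure (S₁ + S₂) :=
      mem_closure_of_tendsto hlim (eventually_atTop.mpr ⟨N₂, fun n hn => ZN n hn⟩)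
    have hznbhd : {y : Y | z - y ∈ C} ∈ 𝓝 z := by
      have hc : Continuous fun y : Y => z - y := continuous_const.sub continuous_id
      have h6 := hc.continuousAt (x := z)
      apply h6; simpa using hCn
    obtain ⟨aY, haY1, haY2⟩ := mem_closure_iff_nhds.mp hzcl _ hznbhd
    obtain ⟨s1, hs1, s2, hs2, hsa⟩ := Set.mem_add.mp haY2
    have hfin := hC3 (s1 - D₁) hs1 (s2 - D₂) hs2 (z - aY) haY1
    have heq2 : D₁ + D₂ + ((s1 - D₁) + (s2 - D₂) + (z - aY)) = z := by
      rw [← hsa]; abel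
    rwa [heq2] at hfin
  -- conclude
  have hball : {t : ℝ | |t| ≤ δ} ∈ 𝓝 (0:ℝ) := by
    have h7 := Metric.closedBall_mem_nhds (0:ℝ) hδpos
    have h8 : Metric.closedBall (0:ℝ) δ = {t : ℝ | |t| ≤ δ} := by
      ext t; simp [Metric.mem_closedBall, Real.dist_eq]
    rwa [h8] at h7
  refine mem_of_superset (inter_mem (mem_nhdsWithin_of_mem_nhds hball) self_mem_nhdsWithin) ?_
  rintro t ⟨ht1, ht2⟩
  exact MAIN t (Set.mem_compl_singleton_iff.mp ht2) ht1

end Trotter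

lemma smul_set_subset_of_le {Y : Type*} [AddCommGroup Y] [Module ℝ Y]
    {C : Set Y} (hC : Convex ℝ C) (h0 : (0:Y) ∈ C) {a b : ℝ}
    (ha : 0 < a) (hab : a ≤ b) : a • C ⊆ b • C := by
  intro y hy
  obtain ⟨c, hc, rfl⟩ := hy
  have hb : 0 < b := lt_of_lt_of_le ha hab
  refine ⟨(a/b) • c, ?_, ?_⟩
  · have h1 : 0 ≤ a/b := by positivity
    have h2 : a/b ≤ 1 := (div_le_one hb).mpr hab
    have := hC hc h0 h1 (by linarith : (0:ℝ) ≤ 1 - a/b) (by ring)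
    simpa using this
  · show b • ((a/b) • c) = a • c
    rw [smul_smul]
    congr 1
    field_simp

theorem dirDeriv_linear_continuous
    {G Y V : Type*} [Group G] [TopologicalSpace G] [IsTopologicalGroup G]
    [AddCommGroup Y] [Module ℝ Y] [TopologicalSpace Y] [IsTopologicalAddGroup Y]
    [ContinuousSMul ℝ Y] [LocallyConvexSpace ℝ Y] [TopologicalSpace.MetrizableSpace Y]
    [AddCommGroup V] [Module ℝ V] [TopologicalSpace V] [IsTopologicalAddGroup V]
    [ContinuousSMul ℝ V] [BaireSpace V]
    (ι : V → OneParamSubgroup G)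
    (hscal : ∀ (c : ℝ) (v : V) (s : ℝ), (ι (c • v)).toFun s = (ι v).toFun (c * s))
    (hadd : ∀ v w : V, TrotterSum (ι (v + w)) (ι v) (ι w))
    (hιcont : Continuous fun v : V =>
      (⟨(ι v).toFun, (ι v).continuous_toFun⟩ : C(ℝ, G)))
    (φ : G → Y) (D : OneParamSubgroup G → G → Y) (hφ : IsLUC1 φ D) (g : G) :
    IsLinearMap ℝ (fun v : V => D (ι v) g) ∧
      Continuous (fun v : V => D (ι v) g) := by
  haveI : T2Space Y := by
    letI := TopologicalSpace.metrizableSpaceMetric Y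
    infer_instance
  set L : V → Y := fun v => D (ι v) g with hLdef
  -- homogeneity
  have hsmul : ∀ (c : ℝ) (v : V), L (c • v) = c • L v := by
    intro c v
    rcases eq_or_ne c 0 with rfl | hc
    · have hzero : ∀ s : ℝ, (ι ((0:ℝ) • v)).toFun s = 1 := by
        intro s
        rw [hscal 0 v s, zero_mul]
        exact (ι v).map_zero
      have h0 : HasDirDerivAt φ (ι ((0:ℝ) • v)) g 0 := by
        rw [HasDirDerivAt]
        have heq : (fun t : ℝ => t⁻¹ • (φ (g * (ι ((0:ℝ) • v)).toFun t) - φ g))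
            = fun _ => (0:Y) := by
          funext t; rw [hzero, mul_one, sub_self, smul_zero]
        rw [heq]
        exact tendsto_const_nhds
      have huniq := tendsto_nhds_unique (hφ.2.1 (ι ((0:ℝ) • v)) g) h0
      show D (ι ((0:ℝ) • v)) g = (0:ℝ) • D (ι v) g
      rw [huniq, zero_smul]
    · have hmap : Tendsto (fun t : ℝ => c * t) (𝓝[≠] (0:ℝ)) (𝓝[≠] (0:ℝ)) := by
        apply Tendsto.inf
        · simpa using (show Continuous fun t : ℝ => c * t by fun_prop).tendsto (0:ℝ)
        · exact tendsto_principal_principal.mpr fun t ht =>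
            Set.mem_compl_singleton_iff.mpr
              (mul_ne_zero hc (Set.mem_compl_singleton_iff.mp ht))
      have hq : HasDirDerivAt φ (ι (c • v)) g (c • D (ι v) g) := by
        rw [HasDirDerivAt]
        have hcomp := (((continuous_const (y := c)).smul continuous_id).tendsto
            (D (ι v) g)).comp ((hφ.2.1 (ι v) g).comp hmap)
        refine hcomp.congr fun t => ?_
        show c • ((c * t)⁻¹ • (φ (g * (ι v).toFun (c * t)) - φ g))
            = t⁻¹ • (φ (g * (ι (c • v)).toFun t) - φ g)
        rw [hscal c v t, smul_smul]
        congr 1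
        rw [mul_inv, ← mul_assoc, mul_inv_cancel₀ hc, one_mul]
      exact tendsto_nhds_unique (hφ.2.1 (ι (c • v)) g) hq
  -- additivity
  have haddL : ∀ v w : V, L (v + w) = L v + L w := fun v w =>
    tendsto_nhds_unique (hφ.2.1 (ι (v + w)) g)
      (hasDirDerivAt_trotter φ D hφ g _ _ _ (hadd v w))
  have hlin : IsLinearMap ℝ L := ⟨haddL, hsmul⟩
  have hL0 : L 0 = 0 := by
    have h := hsmul 0 0
    rwa [zero_smul, zero_smul] at h
  -- continuity of difference quotients in v
  have hfcont : ∀ t : ℝ, Continuous fun v : V => t⁻¹ • (φ (g * (ι v).toFun t) - φ g) := by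
    intro t
    have h1 : Continuous fun v : V => (ι v).toFun t :=
      (continuous_eval_const t).comp hιcont
    exact (((hφ.1.continuous).comp (continuous_const.mul h1)).sub continuous_const).const_smul _
  -- continuity at 0 via Baire
  have hcont0 : ∀ U ∈ 𝓝 (0:Y), L ⁻¹' U ∈ 𝓝 (0:V) := by
    intro U hU
    obtain ⟨C, hCn, hCcl, hCc, hCs, hCU⟩ := exists_closed_convex_symm_nhds U hU
    have h0C : (0:Y) ∈ C := mem_of_mem_nhds hCn
    have hsmC : ∀ r : ℝ, r ≠ 0 → IsClosed (r • C) := by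
      intro r hr
      rw [← Set.image_smul]
      exact (Homeomorph.smulOfNeZero r hr).isClosedMap _ hCcl
    set E : ℕ → Set V := fun n => {v | ∀ t : ℝ, t ≠ 0 → |t| ≤ ((n:ℝ)+1)⁻¹ →
      t⁻¹ • (φ (g * (ι v).toFun t) - φ g) ∈ ((n:ℝ)+1) • C} with hEdef
    have hEcl : ∀ n, IsClosed (E n) := by
      intro n
      have hset : E n = ⋂ (t : ℝ), ⋂ (_ : t ≠ 0), ⋂ (_ : |t| ≤ ((n:ℝ)+1)⁻¹),
          (fun v : V => t⁻¹ • (φ (g * (ι v).toFun t) - φ g)) ⁻¹' (((n:ℝ)+1) • C) := by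
        ext v; simp [hEdef, Set.mem_iInter]
      rw [hset]
      exact isClosed_iInter fun t => isClosed_iInter fun _ => isClosed_iInter fun _ =>
        (hsmC _ (by positivity)).preimage (hfcont t)
    have hEun : ⋃ n, E n = Set.univ := by
      rw [Set.eq_univ_iff_forall]
      intro v
      have habs : ∃ m : ℕ, L v ∈ ((m:ℝ)+1) • C := by
        have htend : Tendsto (fun m : ℕ => ((m:ℝ)+1)⁻¹ • L v) atTop (𝓝 (0:Y)) := by
          have h1 := (tendsto_one_div_add_atTop_nhds_zero_nat (𝕜 := ℝ)).smul_const (L v)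
          rw [zero_smul] at h1
          refine h1.congr fun m => ?_
          rw [one_div]
        obtain ⟨m, hm⟩ := (htend.eventually_mem hCn).exists
        refine ⟨m, ?_⟩
        have : L v = ((m:ℝ)+1) • (((m:ℝ)+1)⁻¹ • L v) := by
          rw [smul_inv_smul₀ (by positivity)]
        rw [this]
        exact Set.smul_mem_smul_set hm
      obtain ⟨m, hm⟩ := habs
      have hev : ∀ᶠ t in 𝓝[≠] (0:ℝ),
          t⁻¹ • (φ (g * (ι v).toFun t) - φ g) ∈ {y : Y | y - L v ∈ C} := by
        apply (hφ.2.1 (ι v) g).eventually_mem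
        have hc : Continuous fun y : Y => y - L v := continuous_id.sub continuous_const
        have h2 := hc.continuousAt (x := L v)
        apply h2; simpa using hCn
      obtain ⟨ε', hε'pos, hε'⟩ := Metric.mem_nhdsWithin_iff.mp hev
      obtain ⟨n₀, hn₀⟩ := exists_nat_gt (max (2/ε') ((m:ℝ)+1))
      have hn₀1 : 2/ε' < (n₀:ℝ) := lt_of_le_of_lt (le_max_left _ _) hn₀
      have hn₀2 : (m:ℝ)+1 < (n₀:ℝ) := lt_of_le_of_lt (le_max_right _ _) hn₀
      refine Set.mem_iUnion.mpr ⟨n₀, ?_⟩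
      intro t ht0 htle
      have hinv : ((n₀:ℝ)+1)⁻¹ < ε' := by
        rw [← one_div, div_lt_iff₀ (by positivity)]
        have : 2 < ε' * (n₀:ℝ) := by
          rw [div_lt_iff₀ hε'pos] at hn₀1; linarith
        nlinarith
      have hy := hε' ⟨by rw [Metric.mem_ball, Real.dist_eq, sub_zero]; linarith [htle],
        Set.mem_compl_singleton_iff.mpr ht0⟩
      have hyC : t⁻¹ • (φ (g * (ι v).toFun t) - φ g) - L v ∈ C := hy
      have hsum : t⁻¹ • (φ (g * (ι v).toFun t) - φ g) ∈ (((m:ℝ)+1)+1) • C := by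
        rw [hCc.add_smul (by positivity) zero_le_one, one_smul]
        have heq : t⁻¹ • (φ (g * (ι v).toFun t) - φ g)
            = L v + (t⁻¹ • (φ (g * (ι v).toFun t) - φ g) - L v) := by abel
        rw [heq]
        exact Set.add_mem_add hm hyC
      exact smul_set_subset_of_le hCc h0C (by positivity)
        (by push_cast; linarith) hsum
    obtain ⟨n, hn⟩ := nonempty_interior_of_iUnion_of_closed hEcl hEun
    obtain ⟨v₀, hv₀⟩ := hn
    have hEmap : ∀ v ∈ E n, L v ∈ ((n:ℝ)+1) • C := by
      intro v hv
      apply (hsmC _ (by positivity : ((n:ℝ)+1) ≠ 0)).mem_of_tendsto (hφ.2.1 (ι v) g)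
      have h1 : {t : ℝ | |t| ≤ ((n:ℝ)+1)⁻¹} ∈ 𝓝 (0:ℝ) := by
        have h7 := Metric.closedBall_mem_nhds (0:ℝ) (show (0:ℝ) < ((n:ℝ)+1)⁻¹ by positivity)
        have h8 : Metric.closedBall (0:ℝ) ((n:ℝ)+1)⁻¹ = {t : ℝ | |t| ≤ ((n:ℝ)+1)⁻¹} := by
          ext t; simp [Metric.mem_closedBall, Real.dist_eq]
        rwa [h8] at h7
      filter_upwards [mem_nhdsWithin_of_mem_nhds h1, self_mem_nhdsWithin] with t ht1 ht2
      exact hv t (Set.mem_compl_singleton_iff.mp ht2) ht1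
    have hv₀E : v₀ ∈ E n := interior_subset hv₀
    have hB : {h : V | v₀ + h ∈ interior (E n)} ∈ 𝓝 (0:V) := by
      have hc : Continuous fun h : V => v₀ + h := continuous_const.add continuous_id
      have h2 := hc.continuousAt (x := (0:V))
      apply h2
      simpa using isOpen_interior.mem_nhds hv₀
    set M : ℝ := 2*((n:ℝ)+1) with hMdef
    have hMpos : 0 < M := by positivity
    have hBmap : ∀ h ∈ {h : V | v₀ + h ∈ interior (E n)}, L h ∈ M • C := by
      intro h hh
      have h1 : L (v₀ + h) ∈ ((n:ℝ)+1) • C := hEmap _ (interior_subset hh)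
      have h0' : L v₀ ∈ ((n:ℝ)+1) • C := hEmap _ hv₀E
      have h2 : -(L v₀) ∈ ((n:ℝ)+1) • C := by
        obtain ⟨c, hc, hce⟩ := h0'
        refine ⟨-c, ?_, by show ((n:ℝ)+1) • (-c) = -(L v₀); rw [smul_neg]; exact congrArg Neg.neg hce⟩
        rw [← hCs]; exact Set.neg_mem_neg.mpr hc
      have h3 : L h = L (v₀ + h) + (-(L v₀)) := by
        rw [haddL]
        abel
      rw [h3, hMdef, two_mul, hCc.add_smul (by positivity) (by positivity)]
      exact Set.add_mem_add h1 h2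
    have hpre : {v : V | M • v ∈ {h : V | v₀ + h ∈ interior (E n)}} ∈ 𝓝 (0:V) := by
      have hc : Continuous fun v : V => M • v := continuous_const.smul continuous_id
      have h2 := hc.continuousAt (x := (0:V))
      apply h2
      simpa using hB
    refine Filter.mem_of_superset hpre ?_
    intro v hv
    have h1 : L (M • v) ∈ M • C := hBmap _ hv
    rw [hsmul M v] at h1
    obtain ⟨c, hc, hce⟩ := h1
    have hLv : L v = c := by
      have h4 := congrArg (fun y => M⁻¹ • y) hce
      simpa [smul_smul, inv_mul_cancel₀ (ne_of_gt hMpos)] using h4.symm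
    show L v ∈ U
    rw [hLv]
    exact hCU hc
  -- full continuity
  have hLc : Continuous L := by
    rw [continuous_iff_continuousAt]
    intro v₀
    have h1 : Tendsto (fun v : V => v - v₀) (𝓝 v₀) (𝓝 (0:V)) := by
      have := (show Continuous fun v : V => v - v₀ by fun_prop).tendsto v₀
      simpa using this
    have h2 : Tendsto L (𝓝 (0:V)) (𝓝 (0:Y)) := Filter.tendsto_def.mpr hcont0
    have h3 := (tendsto_const_nhds (x := L v₀) (f := 𝓝 v₀)).add (h2.comp h1)
    rw [add_zero] at h3
    refine h3.congr fun v => ?_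
    show L v₀ + L (v - v₀) = L v
    rw [← haddL]
    congr 1
    abel
  exact ⟨hlin, hLc⟩
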